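/- Let a > 0, b ∈ ℝ, c > 0 with 1 − b − c ≤ 0, let h : (0,∞) → ℝ be bounded and continuous, m_h = ∫₀^∞ h(t) k_{a,b,c}(t) dt, and let f_h(x) = (1/(x(1+x) k_{a,b,c}(x))) ∫₀ˣ k_{a,b,c}(t)(h(t) − m_h) dt. Then f_h is the unique bounded differentiable solution on (0,∞) of the Kummer Stein equation x(1+x) f′(x) + ((1−b)x − c x(1+x) + a) f(x) = h(x) − m_h, and sup_{x>0} |f_h(x)| ≤ M · sup_{x>0} |h(x) − m_h|, where α = (1 − b − c + √((1−b−c)² + 4 a c))/(2c) and M = max( (1/(α(1+α) k_{a,b,c}(α))) ∫₀^α k_{a,b,c}(t) dt , (1/(α(1+α) k_{a,b,c}(α))) ∫_α^∞ k_{a,b,c}(t) dt ). -/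

import Mathlib

open MeasureTheory Set Filter Real

/-- The Kummer density with parameters `a > 0`, `b ∈ ℝ`, `c > 0`
(normalized by its total mass). -/
noncomputable def kummerDensity (a b c : ℝ) (x : ℝ) : ℝ :=
  (∫ t in Set.Ioi (0 : ℝ), t ^ (a - 1) * (1 + t) ^ (-a - b) * Real.exp (-(c * t)))⁻¹ *
    (x ^ (a - 1) * (1 + x) ^ (-a - b) * Real.exp (-(c * x)))

/-- unnormalized Kummer density -/
noncomputable def Kf (a b c : ℝ) (x : ℝ) : ℝ :=
  x ^ (a - 1) * (1 + x) ^ (-a - b) * Real.exp (-(c * x))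

/-- its total mass -/
noncomputable def Zc (a b c : ℝ) : ℝ := ∫ t in Set.Ioi (0:ℝ), Kf a b c t

lemma kd_eq (a b c x : ℝ) : kummerDensity a b c x = (Zc a b c)⁻¹ * Kf a b c x := rfl

/-- the coefficient q(x) = a + (1-b)x - c x (1+x) -/
noncomputable def qf (a b c : ℝ) (x : ℝ) : ℝ := a + (1-b)*x - c*(x*(1+x))
/-- p(x) = x(1+x)k(x) -/
noncomputable def pf (a b c : ℝ) (x : ℝ) : ℝ := x * (1+x) * kummerDensity a b c x
/-- primitive of the density -/
noncomputable def F0 (a b c : ℝ) (x : ℝ) : ℝ := ∫ t in (0:ℝ)..x, kummerDensity a b c t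

section KS
variable {a b c : ℝ}

lemma one_add_contAt {x : ℝ} (hx : (0:ℝ) ≤ x) (r : ℝ) :
    ContinuousAt (fun y : ℝ => (1 + y) ^ r) x := by
  have h1 : (0:ℝ) < 1 + x := by linarith
  exact (Real.continuousAt_rpow_const _ _ (Or.inl (ne_of_gt h1))).comp
    (continuous_const.add continuous_id).continuousAt

lemma Kf_pos {x : ℝ} (hx : 0 < x) : 0 < Kf a b c x := by
  have h1 : (0:ℝ) < 1 + x := by linarith
  exact mul_pos (mul_pos (rpow_pos_of_pos hx _) (rpow_pos_of_pos h1 _)) (exp_pos _)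

lemma Kf_nonneg {x : ℝ} (hx : 0 ≤ x) : 0 ≤ Kf a b c x := by
  rcases eq_or_lt_of_le hx with h | h
  · simp only [Kf, ← h]; positivity
  · exact (Kf_pos h).le

lemma Kf_contOn : ContinuousOn (Kf a b c) (Ioi (0:ℝ)) := by
  apply ContinuousOn.mul (ContinuousOn.mul ?_ ?_) (by fun_prop)
  · exact fun x hx => (Real.continuousAt_rpow_const x _ (Or.inl (ne_of_gt hx))).continuousWithinAt
  · exact fun x hx => (one_add_contAt (le_of_lt hx) _).continuousWithinAt

/-- the function (1+x)^r * exp(-(c/2) x) is bounded on [0,∞) -/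
lemma poly_exp_bounded (r : ℝ) (hc : 0 < c) :
    ∃ D : ℝ, 0 ≤ D ∧ ∀ x ∈ Ici (0:ℝ), (1+x) ^ r * Real.exp (-(c/2 * x)) ≤ D := by
  set φ : ℝ → ℝ := fun x => (1+x) ^ r * Real.exp (-(c/2 * x)) with hφ
  have hcont : ContinuousOn φ (Ici 0) := by
    apply ContinuousOn.mul (fun x hx => (one_add_contAt hx _).continuousWithinAt) (by fun_prop)
  have hlim : Tendsto φ atTop (nhds 0) := by
    have h1 : Tendsto (fun y : ℝ => y ^ r * Real.exp (-(c/2) * y)) atTop (nhds 0) :=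
      tendsto_rpow_mul_exp_neg_mul_atTop_nhds_zero r (c/2) (by linarith)
    have h2 : Tendsto (fun x : ℝ => 1 + x) atTop atTop := tendsto_atTop_add_const_left _ _ tendsto_id
    have h3 := (h1.comp h2).const_mul (Real.exp (c/2))
    rw [mul_zero] at h3
    apply h3.congr
    intro x
    simp only [Function.comp, hφ]
    rw [show Real.exp (c/2) * ((1+x) ^ r * Real.exp (-(c/2) * (1+x)))
        = (1+x) ^ r * (Real.exp (c/2) * Real.exp (-(c/2) * (1+x))) from by ring, ← Real.exp_add]
    ring_nf
  obtain ⟨T, hT⟩ := Filter.eventually_atTop.mp (hlim.eventually (eventually_le_nhds zero_lt_one))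
  have hcpt : IsCompact (Icc (0:ℝ) (max T 0)) := isCompact_Icc
  obtain ⟨z, _, hz⟩ := hcpt.exists_isMaxOn (nonempty_Icc.mpr (le_max_right _ _))
    (hcont.mono (Icc_subset_Ici_self))
  refine ⟨max (φ z) 1, le_trans zero_le_one (le_max_right _ _), fun x hx => ?_⟩
  rcases le_total x (max T 0) with hle | hle
  · exact le_trans (hz ⟨hx, hle⟩) (le_max_left _ _)
  · exact le_trans (hT x (le_trans (le_max_left _ _) hle)) (le_max_right _ _)


lemma gen_integrable (s r : ℝ) (hs : -1 < s) (hc : 0 < c) :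
    IntegrableOn (fun x : ℝ => x ^ s * (1+x) ^ r * Real.exp (-(c*x))) (Ioi 0) := by
  obtain ⟨D, hD0, hD⟩ := poly_exp_bounded (c := c) r hc
  have hbase : IntegrableOn (fun x : ℝ => x ^ s * Real.exp (-(c/2) * x)) (Ioi 0) := by
    have := integrableOn_rpow_mul_exp_neg_mul_rpow (s := s) (p := 1) (b := c/2)
      hs zero_lt_one (by linarith)
    apply this.congr_fun ?_ measurableSet_Ioi
    intro x _; simp [Real.rpow_one]
  have hg : IntegrableOn (fun x : ℝ => D * (x ^ s * Real.exp (-(c/2) * x))) (Ioi 0) :=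
    hbase.const_mul D
  have hcont : ContinuousOn (fun x : ℝ => x ^ s * (1+x) ^ r * Real.exp (-(c*x))) (Ioi (0:ℝ)) := by
    apply ContinuousOn.mul (ContinuousOn.mul ?_ ?_) (by fun_prop)
    · exact fun x hx => (Real.continuousAt_rpow_const x _ (Or.inl (ne_of_gt hx))).continuousWithinAt
    · exact fun x hx => (one_add_contAt (le_of_lt hx) _).continuousWithinAt
  apply Integrable.mono' hg (hcont.aestronglyMeasurable measurableSet_Ioi)
  filter_upwards [self_mem_ae_restrict (measurableSet_Ioi : MeasurableSet (Ioi (0:ℝ)))] with x hx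
  have hx0 : (0:ℝ) < x := hx
  have h1x : (0:ℝ) < 1 + x := by linarith
  rw [Real.norm_of_nonneg (by positivity)]
  have key : x ^ s * (1+x) ^ r * Real.exp (-(c*x))
      = x ^ s * Real.exp (-(c/2) * x) * ((1+x) ^ r * Real.exp (-(c/2 * x))) := by
    rw [show -(c*x) = -(c/2) * x + -(c/2*x) from by ring, Real.exp_add]
    ring
  rw [key]
  have h1 : (1+x) ^ r * Real.exp (-(c/2*x)) ≤ D := hD x hx0.le
  have h2 : (0:ℝ) ≤ x ^ s * Real.exp (-(c/2) * x) := by positivity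
  calc x ^ s * Real.exp (-(c/2) * x) * ((1+x) ^ r * Real.exp (-(c/2*x)))
      ≤ x ^ s * Real.exp (-(c/2) * x) * D := mul_le_mul_of_nonneg_left h1 h2
    _ = D * (x ^ s * Real.exp (-(c/2) * x)) := by ring

lemma Kf_integrable (ha : 0 < a) (hc : 0 < c) : IntegrableOn (Kf a b c) (Ioi (0:ℝ)) :=
  gen_integrable (a-1) (-a-b) (by linarith) hc

lemma Kf_integral_pos (ha : 0 < a) (hc : 0 < c) : 0 < ∫ x in Ioi (0:ℝ), Kf a b c x := by
  rw [setIntegral_pos_iff_support_of_nonneg_ae ?_ (Kf_integrable ha hc)]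
  · apply lt_of_lt_of_le ?_ (measure_mono (?_ : Ioi 1 ⊆ Function.support (Kf a b c) ∩ Ioi 0))
    · simp [Real.volume_Ioi]
    · intro x hx
      have hx1 : (1:ℝ) < x := hx
      have : (0:ℝ) < x := by linarith
      exact ⟨ne_of_gt (by
        have h1 : (0:ℝ) < 1 + x := by linarith
        exact mul_pos (mul_pos (rpow_pos_of_pos this _) (rpow_pos_of_pos h1 _)) (exp_pos _)), this⟩
  · filter_upwards [self_mem_ae_restrict (measurableSet_Ioi : MeasurableSet (Ioi (0:ℝ)))] with x hx
    exact Kf_nonneg (le_of_lt hx)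

lemma Kf_hasDeriv (a b c : ℝ) {x : ℝ} (hx : 0 < x) :
    HasDerivAt (Kf a b c) (Kf a b c x * ((a-1)/x - (a+b)/(1+x) - c)) x := by
  have h1 : (0:ℝ) < 1 + x := by linarith
  have hd1 : HasDerivAt (fun y : ℝ => y ^ (a-1)) ((a-1) * x ^ (a-1-1)) x :=
    Real.hasDerivAt_rpow_const (Or.inl hx.ne')
  have hd2 : HasDerivAt (fun y : ℝ => (1+y) ^ (-a-b)) (1 * ((-a-b) * (1+x) ^ (-a-b-1))) x := by
    have := ((hasDerivAt_id x).const_add 1).rpow_const (p := -a-b) (Or.inl h1.ne')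
    simpa using this
  have hd3 : HasDerivAt (fun y : ℝ => Real.exp (-(c * y))) (-c * Real.exp (-(c*x))) x := by
    have h : HasDerivAt (fun y : ℝ => -(c * y)) (-c) x := by
      simpa using ((hasDerivAt_id x).const_mul c).fun_neg
    simpa [mul_comm] using h.exp
  have := (hd1.fun_mul hd2).fun_mul hd3
  refine this.congr_deriv (Eq.symm ?_)
  rw [show a - 1 - 1 = (a-1) - 1 from rfl, Real.rpow_sub_one hx.ne',
    show -a - b - 1 = (-a-b) - 1 from rfl, Real.rpow_sub_one h1.ne']
  simp only [Kf]
  field_simp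
  ring


variable (ha : 0 < a) (hc : 0 < c)
include ha hc

lemma Zc_pos : 0 < Zc a b c := Kf_integral_pos ha hc

lemma kd_pos {x : ℝ} (hx : 0 < x) : 0 < kummerDensity a b c x := by
  rw [kd_eq]; exact mul_pos (inv_pos.mpr (Zc_pos ha hc)) (Kf_pos hx)

lemma kd_nonneg {x : ℝ} (hx : 0 ≤ x) : 0 ≤ kummerDensity a b c x := by
  rw [kd_eq]; exact mul_nonneg (inv_nonneg.mpr (Zc_pos ha hc).le) (Kf_nonneg hx)

lemma kd_contOn : ContinuousOn (kummerDensity a b c) (Ioi (0:ℝ)) := by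
  have : kummerDensity a b c = fun x => (Zc a b c)⁻¹ * Kf a b c x := rfl
  exact continuousOn_const.mul Kf_contOn

lemma kd_integrable : IntegrableOn (kummerDensity a b c) (Ioi (0:ℝ)) := by
  have : kummerDensity a b c = fun x => (Zc a b c)⁻¹ * Kf a b c x := rfl
  rw [this]; exact (Kf_integrable ha hc).const_mul _

lemma kd_integral_one : ∫ x in Ioi (0:ℝ), kummerDensity a b c x = 1 := by
  have : (∫ x in Ioi (0:ℝ), kummerDensity a b c x) = (Zc a b c)⁻¹ * ∫ x in Ioi (0:ℝ), Kf a b c x := by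
    rw [← integral_const_mul]; rfl
  rw [this, show (∫ x in Ioi (0:ℝ), Kf a b c x) = Zc a b c from rfl, inv_mul_cancel₀ (Zc_pos ha hc).ne']

lemma kd_hasDeriv {x : ℝ} (hx : 0 < x) :
    HasDerivAt (kummerDensity a b c) (kummerDensity a b c x * ((a-1)/x - (a+b)/(1+x) - c)) x := by
  have := (Kf_hasDeriv a b c hx).const_mul (Zc a b c)⁻¹
  have he : kummerDensity a b c = fun y => (Zc a b c)⁻¹ * Kf a b c y := rfl
  rw [he]
  refine this.congr_deriv (Eq.symm ?_)
  simp only []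
  ring

lemma pf_pos {x : ℝ} (hx : 0 < x) : 0 < pf a b c x :=
  mul_pos (mul_pos hx (by linarith)) (kd_pos ha hc hx)

lemma pf_hasDeriv {x : ℝ} (hx : 0 < x) :
    HasDerivAt (pf a b c) (qf a b c x * kummerDensity a b c x) x := by
  have h1 : (0:ℝ) < 1 + x := by linarith
  have hpoly : HasDerivAt (fun y : ℝ => y * (1+y)) (1 + 2*x) x := by
    have h := (hasDerivAt_id x).fun_mul ((hasDerivAt_id x).const_add 1)
    refine h.congr_deriv (Eq.symm ?_)
    simp [id]
    ring
  have := hpoly.fun_mul (kd_hasDeriv (b := b) ha hc hx)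
  have he : pf a b c = fun y => y * (1+y) * kummerDensity a b c y := rfl
  rw [he]
  refine this.congr_deriv (Eq.symm ?_)
  simp only [qf]
  set k := kummerDensity a b c x
  field_simp
  ring

lemma kd_intervalIntegrable {x y : ℝ} (hx : 0 ≤ x) (hy : x ≤ y) :
    IntervalIntegrable (kummerDensity a b c) volume x y := by
  rw [intervalIntegrable_iff_integrableOn_Ioc_of_le hy]
  exact (kd_integrable ha hc).mono_set (fun t ht => lt_of_le_of_lt hx ht.1)

lemma F0_hasDeriv {x : ℝ} (hx : 0 < x) : HasDerivAt (F0 a b c) (kummerDensity a b c x) x := by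
  apply intervalIntegral.integral_hasDerivAt_right
    (kd_intervalIntegrable ha hc le_rfl hx.le)
    (ContinuousOn.stronglyMeasurableAtFilter isOpen_Ioi (kd_contOn ha hc) x hx)
    ((kd_contOn ha hc).continuousAt (Ioi_mem_nhds hx))

lemma F0_nonneg {x : ℝ} (hx : 0 ≤ x) : 0 ≤ F0 a b c x :=
  intervalIntegral.integral_nonneg hx (fun u hu => kd_nonneg ha hc hu.1)

lemma F0_eq_setInt {x : ℝ} (hx : 0 ≤ x) :
    F0 a b c x = ∫ t in Ioc (0:ℝ) x, kummerDensity a b c t :=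
  intervalIntegral.integral_of_le hx

lemma F1_eq {x : ℝ} (hx : 0 < x) :
    ∫ t in Ioi x, kummerDensity a b c t = 1 - F0 a b c x := by
  have hsplit : Ioc (0:ℝ) x ∪ Ioi x = Ioi 0 := Ioc_union_Ioi_eq_Ioi hx.le
  have h2 : (∫ t in Ioc (0:ℝ) x ∪ Ioi x, kummerDensity a b c t)
      = (∫ t in Ioc (0:ℝ) x, kummerDensity a b c t) + ∫ t in Ioi x, kummerDensity a b c t := by
    apply setIntegral_union (Ioc_disjoint_Ioi le_rfl) measurableSet_Ioi
    · exact (kd_integrable ha hc).mono_set (fun t ht => ht.1)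
    · exact (kd_integrable ha hc).mono_set (fun t ht => lt_trans hx ht)
  rw [hsplit, kd_integral_one ha hc] at h2
  rw [← F0_eq_setInt ha hc hx.le] at h2
  linarith

lemma F0_le_one {x : ℝ} (hx : 0 < x) : F0 a b c x ≤ 1 := by
  have h1 := F1_eq (b := b) ha hc hx
  have h2 : 0 ≤ ∫ t in Ioi x, kummerDensity a b c t :=
    setIntegral_nonneg measurableSet_Ioi (fun t ht => kd_nonneg ha hc (lt_trans hx ht).le)
  linarith

lemma F0_tendsto_zero : Tendsto (F0 a b c) (nhdsWithin 0 (Ioi 0)) (nhds 0) := by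
  have hint : IntegrableOn (kummerDensity a b c) (Icc (0:ℝ) 1) := by
    rw [integrableOn_Icc_iff_integrableOn_Ioc]
    exact (kd_integrable ha hc).mono_set (fun t ht => ht.1)
  have hcont := intervalIntegral.continuousOn_primitive hint
  have h0 : ContinuousWithinAt (fun x => ∫ t in Ioc (0:ℝ) x, kummerDensity a b c t) (Icc 0 1) 0 :=
    hcont 0 (by simp)
  have h1 : Tendsto (fun x => ∫ t in Ioc (0:ℝ) x, kummerDensity a b c t)
      (nhdsWithin 0 (Icc (0:ℝ) 1)) (nhds 0) := by
    have := h0.tendsto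
    simpa using this
  have h2 : Tendsto (fun x => ∫ t in Ioc (0:ℝ) x, kummerDensity a b c t)
      (nhdsWithin 0 (Ioi (0:ℝ))) (nhds 0) := by
    apply h1.mono_left
    rw [← nhdsWithin_Ioc_eq_nhdsGT (zero_lt_one (α := ℝ))]
    exact nhdsWithin_mono _ Ioc_subset_Icc_self
  apply h2.congr'
  filter_upwards [self_mem_nhdsWithin] with x hx
  exact (F0_eq_setInt ha hc (le_of_lt hx)).symm

lemma pf_tendsto_zero_at_zero : Tendsto (pf a b c) (nhdsWithin 0 (Ioi 0)) (nhds 0) := by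
  have t1 : Tendsto (fun x : ℝ => x ^ a) (nhdsWithin 0 (Ioi 0)) (nhds 0) := by
    have := (Real.continuousAt_rpow_const 0 a (Or.inr ha.le)).continuousWithinAt (s := Ioi 0)
    have h0 : (0:ℝ) ^ a = 0 := Real.zero_rpow ha.ne'
    simpa [ContinuousWithinAt, h0] using this
  have t2 : Tendsto (fun x : ℝ => (1+x) ^ (1-a-b) * Real.exp (-(c*x)))
      (nhdsWithin 0 (Ioi 0)) (nhds 1) := by
    have h2 : ContinuousAt (fun x : ℝ => (1+x) ^ (1-a-b) * Real.exp (-(c*x))) 0 :=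
      (one_add_contAt le_rfl _).mul (by fun_prop)
    have := h2.continuousWithinAt (s := Ioi 0)
    simpa [ContinuousWithinAt, Real.rpow_natCast, Real.one_rpow] using this
  have := (t1.mul t2).const_mul (Zc a b c)⁻¹
  rw [zero_mul, mul_zero] at this
  apply this.congr'
  filter_upwards [self_mem_nhdsWithin] with x hx
  have hx0 : (0:ℝ) < x := hx
  have h1 : (0:ℝ) < 1 + x := by linarith
  simp only [pf, kd_eq, Kf]
  rw [show x ^ a = x ^ (a-1) * x by rw [← Real.rpow_add_one hx0.ne']; ring_nf,
    show (1+x) ^ (1-a-b) = (1+x) ^ (-a-b) * (1+x) by rw [← Real.rpow_add_one h1.ne']; ring_nf]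
  ring

-- NEW MATERIAL BELOW

lemma pf_tendsto_zero_atTop : Tendsto (pf a b c) atTop (nhds 0) := by
  set r := max (1-a-b) 0 with hr
  have hC : Tendsto (fun x : ℝ => (Zc a b c)⁻¹ * 2 ^ r * (x ^ (a+r) * Real.exp (-c * x)))
      atTop (nhds 0) := by
    have := (tendsto_rpow_mul_exp_neg_mul_atTop_nhds_zero (a+r) c hc).const_mul
      ((Zc a b c)⁻¹ * 2 ^ r)
    simpa using this
  apply tendsto_of_tendsto_of_tendsto_of_le_of_le' tendsto_const_nhds hC
  · filter_upwards [eventually_ge_atTop (1:ℝ)] with x hx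
    exact le_of_lt (mul_pos (mul_pos (by linarith) (by linarith)) (kd_pos ha hc (by linarith)))
  · filter_upwards [eventually_ge_atTop (1:ℝ)] with x hx
    have hx0 : (0:ℝ) < x := by linarith
    have h1 : (0:ℝ) < 1 + x := by linarith
    have key : pf a b c x = (Zc a b c)⁻¹ * (x ^ a * ((1+x) ^ (1-a-b) * Real.exp (-(c*x)))) := by
      simp only [pf, kd_eq, Kf]
      rw [show x ^ a = x ^ (a-1) * x by rw [← Real.rpow_add_one hx0.ne']; ring_nf,
        show (1+x) ^ (1-a-b) = (1+x) ^ (-a-b) * (1+x) by rw [← Real.rpow_add_one h1.ne']; ring_nf]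
      ring
    rw [key]
    have hb1 : (1+x) ^ (1-a-b) ≤ 2 ^ r * x ^ r := by
      calc (1+x) ^ (1-a-b) ≤ (1+x) ^ r :=
            Real.rpow_le_rpow_of_exponent_le (by linarith) (le_max_left _ _)
        _ ≤ (2*x) ^ r := Real.rpow_le_rpow (by linarith) (by linarith) (le_max_right _ _)
        _ = 2 ^ r * x ^ r := Real.mul_rpow (by norm_num) hx0.le
    have hZ : (0:ℝ) < (Zc a b c)⁻¹ := inv_pos.mpr (Zc_pos ha hc)
    have hxa : (0:ℝ) < x ^ a := rpow_pos_of_pos hx0 _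
    have hexp : (0:ℝ) < Real.exp (-(c*x)) := exp_pos _
    calc (Zc a b c)⁻¹ * (x ^ a * ((1+x) ^ (1-a-b) * Real.exp (-(c*x))))
        ≤ (Zc a b c)⁻¹ * (x ^ a * ((2 ^ r * x ^ r) * Real.exp (-(c*x)))) := by
          apply mul_le_mul_of_nonneg_left ?_ hZ.le
          apply mul_le_mul_of_nonneg_left ?_ hxa.le
          exact mul_le_mul_of_nonneg_right hb1 hexp.le
      _ = (Zc a b c)⁻¹ * 2 ^ r * (x ^ (a+r) * Real.exp (-c * x)) := by
          rw [Real.rpow_add hx0]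
          ring_nf

/-- the third moment of kd is finite and we use it for the tail bound -/
lemma kd_moment3_integrable : IntegrableOn (fun t : ℝ => t ^ 3 * kummerDensity a b c t) (Ioi 0) := by
  have hgen := (gen_integrable (a+2) (-a-b) (by linarith) hc).const_mul (Zc a b c)⁻¹
  apply MeasureTheory.IntegrableOn.congr_fun hgen ?_ measurableSet_Ioi
  intro t ht
  have ht0 : (0:ℝ) < t := ht
  simp only [kd_eq, Kf]
  rw [show t ^ (a+2) = t ^ (a-1) * t ^ (3:ℕ) by
    rw [← Real.rpow_natCast t 3, ← Real.rpow_add ht0]; ring_nf]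
  ring

lemma F1_le_moment {x : ℝ} (hx : 0 < x) :
    (∫ t in Ioi x, kummerDensity a b c t)
      ≤ x⁻¹ ^ 3 * ∫ t in Ioi (0:ℝ), t ^ 3 * kummerDensity a b c t := by
  have hmono : (∫ t in Ioi x, x ^ 3 * kummerDensity a b c t)
      ≤ ∫ t in Ioi x, t ^ 3 * kummerDensity a b c t := by
    apply setIntegral_mono_on
    · exact ((kd_integrable ha hc).mono_set (fun t ht => lt_trans hx ht)).const_mul _
    · exact (kd_moment3_integrable ha hc).mono_set (fun t ht => lt_trans hx ht)
    · exact measurableSet_Ioi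
    · intro t ht
      have ht' : x ≤ t := le_of_lt ht
      exact mul_le_mul_of_nonneg_right (pow_le_pow_left₀ hx.le ht' 3)
        (kd_nonneg ha hc (le_trans hx.le ht'))
  have hsub : (∫ t in Ioi x, t ^ 3 * kummerDensity a b c t)
      ≤ ∫ t in Ioi (0:ℝ), t ^ 3 * kummerDensity a b c t := by
    apply setIntegral_mono_set (kd_moment3_integrable ha hc)
    · filter_upwards [self_mem_ae_restrict (measurableSet_Ioi : MeasurableSet (Ioi (0:ℝ)))] with t ht
      exact mul_nonneg (pow_nonneg ht.le 3) (kd_nonneg ha hc ht.le)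
    · exact HasSubset.Subset.eventuallyLE (fun t ht => lt_trans hx ht)
  rw [integral_const_mul] at hmono
  have hx3 : (0:ℝ) < x ^ 3 := by positivity
  have hfin := hmono.trans hsub
  rw [inv_pow, ← div_eq_inv_mul, le_div_iff₀ hx3, mul_comm]
  exact hfin

lemma qF1_tendsto_zero_atTop :
    Tendsto (fun x => qf a b c x * ∫ t in Ioi x, kummerDensity a b c t) atTop (nhds 0) := by
  set J := ∫ t in Ioi (0:ℝ), t ^ 3 * kummerDensity a b c t with hJ
  have hJ0 : 0 ≤ J := setIntegral_nonneg measurableSet_Ioi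
    (fun t ht => mul_nonneg (pow_nonneg (le_of_lt ht) 3) (kd_nonneg ha hc (le_of_lt ht)))
  set C := (a + |1-b| + 2*c) * J with hC
  have hC0 : 0 ≤ C := by
    have h0 : 0 ≤ a + |1-b| + 2*c := by
      have := abs_nonneg (1-b); linarith
    exact mul_nonneg h0 hJ0
  have hlim : Tendsto (fun x : ℝ => C * x⁻¹) atTop (nhds 0) := by
    simpa using tendsto_inv_atTop_zero.const_mul C
  apply squeeze_zero_norm' ?_ hlim
  filter_upwards [eventually_ge_atTop (1:ℝ)] with x hx
  have hx0 : (0:ℝ) < x := by linarith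
  have hF1 : (0:ℝ) ≤ ∫ t in Ioi x, kummerDensity a b c t :=
    setIntegral_nonneg measurableSet_Ioi (fun t ht => kd_nonneg ha hc (le_trans hx0.le (le_of_lt ht)))
  have hq : |qf a b c x| ≤ (a + |1-b| + 2*c) * x ^ 2 := by
    simp only [qf]
    have e1 : (0:ℝ) ≤ |1-b| := abs_nonneg _
    have e2 : -|1-b| ≤ 1-b := neg_abs_le _
    have e3 : 1-b ≤ |1-b| := le_abs_self _
    rw [abs_le]
    constructor
    · nlinarith [sq_nonneg x, sq_nonneg (x-1)]
    · nlinarith [sq_nonneg x, sq_nonneg (x-1)]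
  have hF1b : (∫ t in Ioi x, kummerDensity a b c t) ≤ x⁻¹ ^ 3 * J :=
    F1_le_moment ha hc hx0
  rw [Real.norm_eq_abs, abs_mul, abs_of_nonneg hF1]
  calc |qf a b c x| * (∫ t in Ioi x, kummerDensity a b c t)
      ≤ ((a + |1-b| + 2*c) * x ^ 2) * (x⁻¹ ^ 3 * J) := by
        apply mul_le_mul hq hF1b hF1
        have := abs_nonneg (1-b)
        positivity
    _ = C * x⁻¹ := by
        rw [hC]
        field_simp

-- NEW: qf has derivative
omit ha hc in
lemma qf_hasDeriv (x : ℝ) : HasDerivAt (qf a b c) ((1-b) - c*(1+2*x)) x := by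
  have h1 : HasDerivAt (fun y : ℝ => a + (1-b)*y - c*(y*(1+y)))
      (0 + (1-b)*1 - c*(1*(1+x) + x*1)) x := by
    exact ((hasDerivAt_const x a).add ((hasDerivAt_id x).const_mul (1-b))).sub
      (((hasDerivAt_id x).mul ((hasDerivAt_id x).const_add 1)).const_mul c)
  have he : qf a b c = fun y : ℝ => a + (1-b)*y - c*(y*(1+y)) := rfl
  rw [he]
  convert h1 using 1
  ring

variable (hbc : 1 - b - c ≤ 0)
include hbc

/-- G = p - q * F0 -/
lemma G_mono : MonotoneOn (fun x => pf a b c x - qf a b c x * F0 a b c x) (Ioi (0:ℝ)) := by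
  apply monotoneOn_of_deriv_nonneg (convex_Ioi 0)
  · apply ContinuousOn.sub
    · exact fun x hx => ((pf_hasDeriv (b:=b) ha hc hx).continuousAt).continuousWithinAt
    · exact ContinuousOn.mul (fun x hx => ((qf_hasDeriv (a:=a) (b:=b) (c:=c) x).continuousAt).continuousWithinAt)
        (fun x hx => ((F0_hasDeriv ha hc hx).continuousAt).continuousWithinAt)
  · rw [interior_Ioi]
    intro x hx
    exact (((pf_hasDeriv (b:=b) ha hc hx).sub ((qf_hasDeriv (a:=a) (b:=b) (c:=c) x).mul (F0_hasDeriv (b:=b) ha hc hx))).differentiableAt).differentiableWithinAt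
  · rw [interior_Ioi]
    intro x hx
    have hd := (pf_hasDeriv (b := b) ha hc hx).fun_sub ((qf_hasDeriv (a:=a) (b:=b) (c:=c) x).fun_mul (F0_hasDeriv (b:=b) ha hc hx))
    rw [hd.deriv]
    have h1 : 0 ≤ -((1-b) - c*(1+2*x)) := by
      have hx0 : (0:ℝ) < x := hx
      nlinarith
    have h2 : 0 ≤ F0 a b c x := F0_nonneg ha hc (le_of_lt hx)
    have : qf a b c x * kummerDensity a b c x -
        (((1-b) - c*(1+2*x)) * F0 a b c x + qf a b c x * kummerDensity a b c x)
        = -((1-b) - c*(1+2*x)) * F0 a b c x := by ring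
    rw [this]
    exact mul_nonneg h1 h2

lemma G_tendsto_zero :
    Tendsto (fun x => pf a b c x - qf a b c x * F0 a b c x) (nhdsWithin 0 (Ioi 0)) (nhds 0) := by
  have hq : Tendsto (qf a b c) (nhdsWithin 0 (Ioi 0)) (nhds (qf a b c 0)) := by
    exact ((qf_hasDeriv (a:=a) (b:=b) (c:=c) 0).continuousAt).continuousWithinAt
  have := (pf_tendsto_zero_at_zero (b := b) ha hc).sub (hq.mul (F0_tendsto_zero (b:=b) ha hc))
  simpa using this

lemma G_nonneg {x : ℝ} (hx : 0 < x) : 0 ≤ pf a b c x - qf a b c x * F0 a b c x := by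
  apply le_of_tendsto (G_tendsto_zero ha hc hbc)
  filter_upwards [self_mem_nhdsWithin, mem_nhdsWithin_of_mem_nhds (Iio_mem_nhds hx)] with y hy hyx
  exact G_mono ha hc hbc hy (mem_Ioi.mpr hx) (le_of_lt hyx)

lemma H_anti : AntitoneOn (fun x => qf a b c x * (1 - F0 a b c x) + pf a b c x) (Ioi (0:ℝ)) := by
  apply antitoneOn_of_deriv_nonpos (convex_Ioi 0)
  · apply ContinuousOn.add
    · exact ContinuousOn.mul (fun x hx => ((qf_hasDeriv (a:=a) (b:=b) (c:=c) x).continuousAt).continuousWithinAt)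
        (ContinuousOn.sub continuousOn_const (fun x hx => ((F0_hasDeriv ha hc hx).continuousAt).continuousWithinAt))
    · exact fun x hx => ((pf_hasDeriv (b:=b) ha hc hx).continuousAt).continuousWithinAt
  · rw [interior_Ioi]
    intro x hx
    exact (((qf_hasDeriv x).mul ((hasDerivAt_const x (1:ℝ)).sub (F0_hasDeriv (b:=b) ha hc hx))).add
      (pf_hasDeriv (b:=b) ha hc hx)).differentiableAt.differentiableWithinAt
  · rw [interior_Ioi]
    intro x hx
    have hd := ((qf_hasDeriv (a:=a) (b:=b) (c:=c) x).fun_mul ((hasDerivAt_const x (1:ℝ)).fun_sub (F0_hasDeriv (b:=b) ha hc hx))).fun_add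
      (pf_hasDeriv (b:=b) ha hc hx)
    rw [hd.deriv]
    have hx0 : (0:ℝ) < x := hx
    have h1 : ((1-b) - c*(1+2*x)) ≤ 0 := by nlinarith
    have h2 : 0 ≤ 1 - F0 a b c x := by linarith [F0_le_one (b:=b) ha hc hx0]
    have heq : ((1-b) - c*(1+2*x)) * (1 - F0 a b c x) +
        qf a b c x * (0 - kummerDensity a b c x) + qf a b c x * kummerDensity a b c x
        = ((1-b) - c*(1+2*x)) * (1 - F0 a b c x) := by ring
    rw [heq]
    exact mul_nonpos_of_nonpos_of_nonneg h1 h2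

lemma H_tendsto_zero :
    Tendsto (fun x => qf a b c x * (1 - F0 a b c x) + pf a b c x) atTop (nhds 0) := by
  have h1 := (qF1_tendsto_zero_atTop (b := b) ha hc).add (pf_tendsto_zero_atTop (b := b) ha hc)
  rw [add_zero] at h1
  apply h1.congr'
  filter_upwards [eventually_gt_atTop (0:ℝ)] with x hx
  rw [F1_eq ha hc hx]

lemma H_nonneg {x : ℝ} (hx : 0 < x) :
    0 ≤ qf a b c x * (1 - F0 a b c x) + pf a b c x := by
  apply le_of_tendsto (H_tendsto_zero ha hc hbc)
  filter_upwards [eventually_ge_atTop x, eventually_gt_atTop (0:ℝ)] with y hy hy0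
  exact H_anti ha hc hbc (mem_Ioi.mpr hx) (mem_Ioi.mpr hy0) hy

/-- r = F0 / pf is monotone on (0,∞) -/
lemma r_mono : MonotoneOn (fun x => F0 a b c x / pf a b c x) (Ioi (0:ℝ)) := by
  apply monotoneOn_of_deriv_nonneg (convex_Ioi 0)
  · exact ContinuousOn.div (fun x hx => ((F0_hasDeriv ha hc hx).continuousAt).continuousWithinAt)
      (fun x hx => ((pf_hasDeriv (b:=b) ha hc hx).continuousAt).continuousWithinAt)
      (fun x hx => (pf_pos ha hc hx).ne')
  · rw [interior_Ioi]
    intro x hx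
    exact ((F0_hasDeriv ha hc hx).div (pf_hasDeriv (b:=b) ha hc hx)
      (pf_pos ha hc hx).ne').differentiableAt.differentiableWithinAt
  · rw [interior_Ioi]
    intro x hx
    have hd := (F0_hasDeriv (b := b) ha hc hx).fun_div (pf_hasDeriv (b:=b) ha hc hx) (pf_pos ha hc hx).ne'
    rw [hd.deriv]
    apply div_nonneg ?_ (sq_nonneg _)
    have heq : kummerDensity a b c x * pf a b c x - F0 a b c x * (qf a b c x * kummerDensity a b c x)
        = kummerDensity a b c x * (pf a b c x - qf a b c x * F0 a b c x) := by ring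
    rw [heq]
    exact mul_nonneg (kd_nonneg ha hc (le_of_lt hx)) (G_nonneg ha hc hbc hx)

/-- s = (1 - F0) / pf is antitone on (0,∞) -/
lemma s_anti : AntitoneOn (fun x => (1 - F0 a b c x) / pf a b c x) (Ioi (0:ℝ)) := by
  apply antitoneOn_of_deriv_nonpos (convex_Ioi 0)
  · exact ContinuousOn.div (ContinuousOn.sub continuousOn_const
      (fun x hx => ((F0_hasDeriv ha hc hx).continuousAt).continuousWithinAt))
      (fun x hx => ((pf_hasDeriv (b:=b) ha hc hx).continuousAt).continuousWithinAt)
      (fun x hx => (pf_pos ha hc hx).ne')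
  · rw [interior_Ioi]
    intro x hx
    exact (((hasDerivAt_const x (1:ℝ)).sub (F0_hasDeriv ha hc hx)).div (pf_hasDeriv (b:=b) ha hc hx)
      (pf_pos ha hc hx).ne').differentiableAt.differentiableWithinAt
  · rw [interior_Ioi]
    intro x hx
    have hd := ((hasDerivAt_const x (1:ℝ)).fun_sub (F0_hasDeriv (b := b) ha hc hx)).fun_div (pf_hasDeriv (b:=b) ha hc hx)
      (pf_pos ha hc hx).ne'
    rw [hd.deriv]
    apply div_nonpos_of_nonpos_of_nonneg ?_ (sq_nonneg _)
    have heq : (0 - kummerDensity a b c x) * pf a b c x -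
        (1 - F0 a b c x) * (qf a b c x * kummerDensity a b c x)
        = -(kummerDensity a b c x * (qf a b c x * (1 - F0 a b c x) + pf a b c x)) := by ring
    rw [heq]
    simp only [neg_nonpos]
    exact mul_nonneg (kd_nonneg ha hc (le_of_lt hx)) (H_nonneg ha hc hbc hx)

end KS

/-- for `1 − b − c ≤ 0`, the function `f_h` is the unique bounded
differentiable solution of the Kummer Stein equation on `(0,∞)` and satisfies
`sup_{x>0} |f_h(x)| ≤ M · sup_{x>0} |h(x) − m_h|`, where
`α = (1 − b − c + √((1−b−c)² + 4ac))/(2c)` and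
`M = max( (α(1+α)k(α))⁻¹ ∫₀^α k , (α(1+α)k(α))⁻¹ ∫_α^∞ k )`.
(The supremum bound is expressed via arbitrary upper bounds `B` of `|h − m_h|`.) -/
theorem kummer_stein_solution_unique_bounded_and_bound (a b c : ℝ)
    (ha : 0 < a) (hc : 0 < c) (hbc : 1 - b - c ≤ 0)
    (h : ℝ → ℝ) (hh_cont : ContinuousOn h (Set.Ioi 0))
    (hh_bdd : ∃ C, ∀ x ∈ Set.Ioi (0 : ℝ), |h x| ≤ C) :
    let m := ∫ t in Set.Ioi (0 : ℝ), h t * kummerDensity a b c t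
    let fh : ℝ → ℝ := fun x =>
      (x * (1 + x) * kummerDensity a b c x)⁻¹ *
        ∫ t in (0 : ℝ)..x, kummerDensity a b c t * (h t - m)
    let α := (1 - b - c + Real.sqrt ((1 - b - c) ^ 2 + 4 * a * c)) / (2 * c)
    let M := max
      ((α * (1 + α) * kummerDensity a b c α)⁻¹ * ∫ t in (0 : ℝ)..α, kummerDensity a b c t)
      ((α * (1 + α) * kummerDensity a b c α)⁻¹ * ∫ t in Set.Ioi α, kummerDensity a b c t)
    -- `f_h` is a bounded differentiable solution of the Kummer Stein equation
    ((∀ x ∈ Set.Ioi (0 : ℝ), DifferentiableAt ℝ fh x ∧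
        x * (1 + x) * deriv fh x + ((1 - b) * x - c * x * (1 + x) + a) * fh x = h x - m) ∧
      (∃ C, ∀ x ∈ Set.Ioi (0 : ℝ), |fh x| ≤ C)) ∧
    -- uniqueness among bounded differentiable solutions
    (∀ f : ℝ → ℝ, (∀ x ∈ Set.Ioi (0 : ℝ), DifferentiableAt ℝ f x) →
      (∃ C, ∀ x ∈ Set.Ioi (0 : ℝ), |f x| ≤ C) →
      (∀ x ∈ Set.Ioi (0 : ℝ),
        x * (1 + x) * deriv f x + ((1 - b) * x - c * x * (1 + x) + a) * f x = h x - m) →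
      ∀ x ∈ Set.Ioi (0 : ℝ), f x = fh x) ∧
    -- the uniform bound
    (∀ B : ℝ, (∀ x ∈ Set.Ioi (0 : ℝ), |h x - m| ≤ B) →
      ∀ x ∈ Set.Ioi (0 : ℝ), |fh x| ≤ M * B) := by
  intro m fh α M
  obtain ⟨C, hC⟩ := hh_bdd
  have hC0 : 0 ≤ C := le_trans (abs_nonneg _) (hC 1 (by norm_num))
  -- the integrand of fh
  set g : ℝ → ℝ := fun t => kummerDensity a b c t * (h t - m) with hg
  set Fn : ℝ → ℝ := fun x => ∫ t in (0:ℝ)..x, g t with hFn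
  have hfh_fun : fh = fun x => Fn x / pf a b c x :=
    funext (fun x => (div_eq_inv_mul _ _).symm)
  -- continuity of g on Ioi 0
  have hg_cont : ContinuousOn g (Ioi (0:ℝ)) :=
    (kd_contOn ha hc).mul (hh_cont.sub continuousOn_const)
  -- integrability of g on Ioi 0
  have hg_int : IntegrableOn g (Ioi (0:ℝ)) := by
    apply Integrable.mono' ((kd_integrable (b:=b) ha hc).const_mul (C + |m|))
      (hg_cont.aestronglyMeasurable measurableSet_Ioi)
    filter_upwards [self_mem_ae_restrict (measurableSet_Ioi : MeasurableSet (Ioi (0:ℝ)))] with t ht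
    have ht0 : (0:ℝ) < t := ht
    rw [Real.norm_eq_abs, hg]
    simp only
    rw [abs_mul, abs_of_nonneg (kd_nonneg ha hc ht0.le)]
    have : |h t - m| ≤ C + |m| := by
      calc |h t - m| ≤ |h t| + |m| := abs_sub _ _
        _ ≤ C + |m| := by linarith [hC t ht]
    calc kummerDensity a b c t * |h t - m| ≤ kummerDensity a b c t * (C + |m|) :=
          mul_le_mul_of_nonneg_left this (kd_nonneg ha hc ht0.le)
      _ = (C + |m|) * kummerDensity a b c t := by ring
  -- integrability of h * kd
  have hhk_int : IntegrableOn (fun t => h t * kummerDensity a b c t) (Ioi (0:ℝ)) := by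
    apply Integrable.mono' ((kd_integrable (b:=b) ha hc).const_mul C)
      ((hh_cont.mul (kd_contOn ha hc)).aestronglyMeasurable measurableSet_Ioi)
    filter_upwards [self_mem_ae_restrict (measurableSet_Ioi : MeasurableSet (Ioi (0:ℝ)))] with t ht
    have ht0 : (0:ℝ) < t := ht
    rw [Real.norm_eq_abs, Pi.mul_apply, abs_mul, abs_of_nonneg (kd_nonneg ha hc ht0.le)]
    exact mul_le_mul_of_nonneg_right (hC t ht) (kd_nonneg ha hc ht0.le)
  -- total integral of g is zero
  have htot : ∫ t in Ioi (0:ℝ), g t = 0 := by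
    have e1 : ∀ t : ℝ, g t = h t * kummerDensity a b c t - m * kummerDensity a b c t := by
      intro t; rw [hg]; ring
    rw [funext e1] at *
    rw [integral_sub hhk_int ((kd_integrable ha hc).const_mul m)]
    rw [integral_const_mul, kd_integral_one ha hc]
    simp [m]
  -- g is interval integrable from 0
  have hg_ii : ∀ {x : ℝ}, 0 ≤ x → IntervalIntegrable g volume 0 x := by
    intro x hx
    rw [intervalIntegrable_iff_integrableOn_Ioc_of_le hx]
    exact hg_int.mono_set (fun t ht => ht.1)
  -- derivative of Fn
  have hFn_deriv : ∀ {x : ℝ}, 0 < x → HasDerivAt Fn (g x) x := by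
    intro x hx
    exact intervalIntegral.integral_hasDerivAt_right (hg_ii hx.le)
      (ContinuousOn.stronglyMeasurableAtFilter isOpen_Ioi hg_cont x hx)
      (hg_cont.continuousAt (Ioi_mem_nhds hx))
  -- fh has derivative
  have hfh_hasDeriv : ∀ {x : ℝ}, 0 < x → HasDerivAt fh
      ((g x * pf a b c x - Fn x * (qf a b c x * kummerDensity a b c x)) / (pf a b c x) ^ 2) x := by
    intro x hx
    rw [hfh_fun]
    exact (hFn_deriv hx).div (pf_hasDeriv ha hc hx) (pf_pos ha hc hx).ne'
  -- fh solves the Stein equation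
  have hsol : ∀ x ∈ Set.Ioi (0 : ℝ), DifferentiableAt ℝ fh x ∧
      x * (1 + x) * deriv fh x + ((1 - b) * x - c * x * (1 + x) + a) * fh x = h x - m := by
    intro x hx
    have hx0 : (0:ℝ) < x := hx
    have h1 : (0:ℝ) < 1 + x := by linarith
    have hkd := kd_pos (b := b) ha hc hx0
    refine ⟨(hfh_hasDeriv hx0).differentiableAt, ?_⟩
    rw [(hfh_hasDeriv hx0).deriv]
    have hfhx : fh x = Fn x / pf a b c x := by rw [hfh_fun]
    rw [hfhx]
    have hpf : pf a b c x = x * (1+x) * kummerDensity a b c x := rfl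
    have hgx : g x = kummerDensity a b c x * (h x - m) := rfl
    have hqf : qf a b c x = a + (1-b)*x - c*(x*(1+x)) := rfl
    rw [hgx, hpf, hqf]
    field_simp
    ring
  -- bound part
  have hα : 0 < α := by
    have h1 : |1-b-c| < Real.sqrt ((1-b-c)^2 + 4*a*c) := by
      rw [← Real.sqrt_sq_eq_abs]
      apply Real.sqrt_lt_sqrt (sq_nonneg _)
      nlinarith
    have h2 : -(1-b-c) ≤ |1-b-c| := neg_le_abs _
    apply div_pos (by linarith) (by linarith)
  have hbound : ∀ B : ℝ, (∀ x ∈ Set.Ioi (0 : ℝ), |h x - m| ≤ B) →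
      ∀ x ∈ Set.Ioi (0 : ℝ), |fh x| ≤ M * B := by
    intro B hB x hx
    have hx0 : (0:ℝ) < x := hx
    have hB0 : 0 ≤ B := le_trans (abs_nonneg _) (hB 1 (by norm_num))
    -- |Fn x| ≤ B * F0 x
    have hb1 : |Fn x| ≤ B * F0 a b c x := by
      rw [hFn]
      simp only
      rw [intervalIntegral.integral_of_le hx0.le, F0_eq_setInt ha hc hx0.le]
      calc |∫ t in Ioc (0:ℝ) x, g t| ≤ ∫ t in Ioc (0:ℝ) x, |g t| := by
            simpa [Real.norm_eq_abs] using
              norm_integral_le_integral_norm (μ := volume.restrict (Ioc (0:ℝ) x)) g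
        _ ≤ ∫ t in Ioc (0:ℝ) x, B * kummerDensity a b c t := by
            apply setIntegral_mono_on
            · exact (hg_int.mono_set (fun t ht => ht.1)).abs
            · exact ((kd_integrable ha hc).mono_set (fun t ht => ht.1)).const_mul B
            · exact measurableSet_Ioc
            · intro t ht
              rw [hg]
              simp only
              rw [abs_mul, abs_of_nonneg (kd_nonneg ha hc (le_of_lt ht.1))]
              calc kummerDensity a b c t * |h t - m|
                  ≤ kummerDensity a b c t * B :=
                    mul_le_mul_of_nonneg_left (hB t ht.1) (kd_nonneg ha hc (le_of_lt ht.1))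
                _ = B * kummerDensity a b c t := by ring
        _ = B * ∫ t in Ioc (0:ℝ) x, kummerDensity a b c t := integral_const_mul B _
    -- |Fn x| ≤ B * (1 - F0 x)
    have hb2 : |Fn x| ≤ B * (1 - F0 a b c x) := by
      have hsplit : Fn x + ∫ t in Ioi x, g t = 0 := by
        rw [← htot]
        rw [hFn]
        simp only
        rw [intervalIntegral.integral_of_le hx0.le]
        rw [← setIntegral_union (Ioc_disjoint_Ioi le_rfl) measurableSet_Ioi
          (hg_int.mono_set (fun t ht => ht.1)) (hg_int.mono_set (fun t ht => lt_trans hx0 ht)),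
          Ioc_union_Ioi_eq_Ioi hx0.le]
      have hFneq : Fn x = -∫ t in Ioi x, g t := by linarith
      rw [hFneq, abs_neg]
      rw [← F1_eq ha hc hx0, ← integral_const_mul]
      calc |∫ t in Ioi x, g t| ≤ ∫ t in Ioi x, |g t| := by
            simpa [Real.norm_eq_abs] using
              norm_integral_le_integral_norm (μ := volume.restrict (Ioi x)) g
        _ ≤ ∫ t in Ioi x, B * kummerDensity a b c t := by
            apply setIntegral_mono_on
            · exact (hg_int.mono_set (fun t ht => lt_trans hx0 ht)).abs
            · exact ((kd_integrable ha hc).mono_set (fun t ht => lt_trans hx0 ht)).const_mul B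
            · exact measurableSet_Ioi
            · intro t ht
              have ht0 : (0:ℝ) < t := lt_trans hx0 ht
              rw [hg]
              simp only
              rw [abs_mul, abs_of_nonneg (kd_nonneg ha hc ht0.le)]
              calc kummerDensity a b c t * |h t - m|
                  ≤ kummerDensity a b c t * B :=
                    mul_le_mul_of_nonneg_left (hB t ht0) (kd_nonneg ha hc ht0.le)
                _ = B * kummerDensity a b c t := by ring
    have hfx : |fh x| = |Fn x| / pf a b c x := by
      rw [hfh_fun]
      simp only
      rw [abs_div, abs_of_pos (pf_pos ha hc hx0)]
    have hM1 : ((α * (1 + α) * kummerDensity a b c α)⁻¹ *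
        ∫ t in (0 : ℝ)..α, kummerDensity a b c t) = F0 a b c α / pf a b c α := by
      rw [div_eq_inv_mul]; rfl
    have hM2 : ((α * (1 + α) * kummerDensity a b c α)⁻¹ *
        ∫ t in Set.Ioi α, kummerDensity a b c t) = (1 - F0 a b c α) / pf a b c α := by
      rw [div_eq_inv_mul, F1_eq ha hc hα]; rfl
    rcases le_total x α with hxa | hxa
    · have hr := r_mono ha hc hbc (mem_Ioi.mpr hx0) (mem_Ioi.mpr hα) hxa
      calc |fh x| = |Fn x| / pf a b c x := hfx
        _ ≤ B * F0 a b c x / pf a b c x :=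
            (div_le_div_iff_of_pos_right (pf_pos (b:=b) ha hc hx0)).mpr hb1
        _ = B * (F0 a b c x / pf a b c x) := by ring
        _ ≤ B * (F0 a b c α / pf a b c α) := mul_le_mul_of_nonneg_left hr hB0
        _ ≤ B * M := by
            apply mul_le_mul_of_nonneg_left ?_ hB0
            rw [← hM1]
            exact le_max_left _ _
        _ = M * B := by ring
    · have hs := s_anti ha hc hbc (mem_Ioi.mpr hα) (mem_Ioi.mpr hx0) hxa
      calc |fh x| = |Fn x| / pf a b c x := hfx
        _ ≤ B * (1 - F0 a b c x) / pf a b c x :=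
            (div_le_div_iff_of_pos_right (pf_pos (b:=b) ha hc hx0)).mpr hb2
        _ = B * ((1 - F0 a b c x) / pf a b c x) := by ring
        _ ≤ B * ((1 - F0 a b c α) / pf a b c α) := mul_le_mul_of_nonneg_left hs hB0
        _ ≤ B * M := by
            apply mul_le_mul_of_nonneg_left ?_ hB0
            rw [← hM2]
            exact le_max_right _ _
        _ = M * B := by ring
  -- boundedness of fh
  have hfh_bdd : ∃ C', ∀ x ∈ Set.Ioi (0 : ℝ), |fh x| ≤ C' := by
    refine ⟨M * (C + |m|), ?_⟩
    apply hbound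
    intro x hx
    calc |h x - m| ≤ |h x| + |m| := abs_sub _ _
      _ ≤ C + |m| := by linarith [hC x hx]
  -- uniqueness
  have huniq : ∀ f : ℝ → ℝ, (∀ x ∈ Set.Ioi (0 : ℝ), DifferentiableAt ℝ f x) →
      (∃ C, ∀ x ∈ Set.Ioi (0 : ℝ), |f x| ≤ C) →
      (∀ x ∈ Set.Ioi (0 : ℝ),
        x * (1 + x) * deriv f x + ((1 - b) * x - c * x * (1 + x) + a) * f x = h x - m) →
      ∀ x ∈ Set.Ioi (0 : ℝ), f x = fh x := by
    intro f hf_diff hf_bdd hf_eq x hx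
    obtain ⟨Cf, hCf⟩ := hf_bdd
    obtain ⟨Cfh, hCfh⟩ := hfh_bdd
    set pg : ℝ → ℝ := fun y => pf a b c y * (f y - fh y) with hpg
    -- pg has zero derivative on Ioi 0
    have hpg_deriv : ∀ y ∈ Ioi (0:ℝ), HasDerivAt pg 0 y := by
      intro y hy
      have hy0 : (0:ℝ) < y := hy
      have hdg : HasDerivAt (fun z => f z - fh z) (deriv f y - deriv fh y) y :=
        ((hf_diff y hy).hasDerivAt).fun_sub ((hfh_hasDeriv hy0).differentiableAt.hasDerivAt)
      have hd := (pf_hasDeriv (b:=b) ha hc hy0).fun_mul hdg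
      refine hd.congr_deriv (Eq.symm ?_)
      have e0 : (y * (1 + y) * deriv f y + ((1 - b) * y - c * y * (1 + y) + a) * f y)
          - (y * (1 + y) * deriv fh y + ((1 - b) * y - c * y * (1 + y) + a) * fh y) = 0 := by
        rw [hf_eq y hy, (hsol y hy).2]
        ring
      have hqf : qf a b c y = a + (1-b)*y - c*(y*(1+y)) := rfl
      have hpf : pf a b c y = y * (1+y) * kummerDensity a b c y := rfl
      rw [hqf, hpf]
      linear_combination (-(kummerDensity a b c y)) * e0
    -- pg is constant on Ioi 0
    have hpg_const : ∀ y ∈ Ioi (0:ℝ), ∀ z ∈ Ioi (0:ℝ), pg y = pg z := by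
      have hmono : MonotoneOn pg (Ioi (0:ℝ)) := by
        apply monotoneOn_of_deriv_nonneg (convex_Ioi 0)
          (fun y hy => (hpg_deriv y hy).continuousAt.continuousWithinAt)
        · rw [interior_Ioi]
          exact fun y hy => (hpg_deriv y hy).differentiableAt.differentiableWithinAt
        · rw [interior_Ioi]
          intro y hy
          rw [(hpg_deriv y hy).deriv]
      have hanti : AntitoneOn pg (Ioi (0:ℝ)) := by
        apply antitoneOn_of_deriv_nonpos (convex_Ioi 0)
          (fun y hy => (hpg_deriv y hy).continuousAt.continuousWithinAt)
        · rw [interior_Ioi]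
          exact fun y hy => (hpg_deriv y hy).differentiableAt.differentiableWithinAt
        · rw [interior_Ioi]
          intro y hy
          rw [(hpg_deriv y hy).deriv]
      intro y hy z hz
      rcases le_total y z with hyz | hyz
      · exact le_antisymm (hmono hy hz hyz) (hanti hy hz hyz)
      · exact le_antisymm (hanti hz hy hyz) (hmono hz hy hyz)
    -- pg tends to 0 at 0+
    have hpg_lim : Tendsto pg (nhdsWithin 0 (Ioi 0)) (nhds 0) := by
      apply squeeze_zero_norm' ?_
        (show Tendsto (fun y => (Cf + Cfh) * pf a b c y) (nhdsWithin 0 (Ioi 0)) (nhds 0) by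
          simpa using ((pf_tendsto_zero_at_zero (b:=b) ha hc).const_mul (Cf + Cfh)))
      filter_upwards [self_mem_nhdsWithin] with y hy
      have hy0 : (0:ℝ) < y := hy
      rw [hpg]
      simp only
      rw [Real.norm_eq_abs, abs_mul, abs_of_pos (pf_pos ha hc hy0)]
      calc pf a b c y * |f y - fh y| ≤ pf a b c y * (Cf + Cfh) := by
            apply mul_le_mul_of_nonneg_left ?_ (pf_pos ha hc hy0).le
            calc |f y - fh y| ≤ |f y| + |fh y| := abs_sub _ _
              _ ≤ Cf + Cfh := add_le_add (hCf y hy) (hCfh y hy)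
        _ = (Cf + Cfh) * pf a b c y := by ring
    -- conclude pg x = 0
    have hpgx : pg x = 0 := by
      have hconst : Tendsto pg (nhdsWithin 0 (Ioi 0)) (nhds (pg x)) := by
        have hcc : Tendsto (fun _ : ℝ => pg x) (nhdsWithin 0 (Ioi 0)) (nhds (pg x)) :=
          tendsto_const_nhds
        apply hcc.congr'
        filter_upwards [self_mem_nhdsWithin] with y hy
        exact hpg_const x hx y hy
      exact tendsto_nhds_unique hconst hpg_lim
    have hpf := pf_pos (b := b) ha hc (mem_Ioi.mp hx)
    have hsub : f x - fh x = 0 := by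
      rcases mul_eq_zero.mp hpgx with h1 | h1
      · exact absurd h1 hpf.ne'
      · exact h1
    linarith [hsub]
  exact ⟨⟨hsol, hfh_bdd⟩, huniq, hbound⟩
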